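/- arXiv:0912.2500 — 4 statements merged into one kernel-verified Lean document; each statement's English description precedes it below -/
import Mathlib

section
/- Let E be a real Banach space, let r > 0, α ∈ (0, 1], and a, b ≥ 0, and suppose f : ℂ → E is differentiable at every point z with 0 < |z| ≤ r, with derivative satisfying ‖Df(z)‖ ≤ a·|z|^{α−1} + b for all z with 0 < |z| ≤ r. Then for all radii 0 < r₁ ≤ r₂ ≤ r and all angles θ₁, θ₂ ∈ [0, 2π]: ‖f(r₂·e^{iθ₂}) − f(r₁·e^{iθ₁})‖ ≤ (a/α)·(r₂^α − r₁^α) + b·(r₂ − r₁) + (a·r₁^α + b·r₁)·|θ₂ − θ₁|. -/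
/-- Two-point modulus-of-continuity estimate from the removal-of-singularities proof:
if `f : ℂ → E` is differentiable on the punctured disc `0 < |z| ≤ r` with
`‖Df(z)‖ ≤ a |z|^(α-1) + b`, then for `0 < r₁ ≤ r₂ ≤ r` and `θ₁, θ₂ ∈ [0, 2π]`,
`‖f(r₂ e^{iθ₂}) - f(r₁ e^{iθ₁})‖ ≤ (a/α)(r₂^α - r₁^α) + b (r₂ - r₁)
  + (a r₁^α + b r₁)|θ₂ - θ₁|`. -/
theorem modulus_of_continuity_estimate
    {E : Type*} [NormedAddCommGroup E] [NormedSpace ℝ E]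
    (r : ℝ) (hr : 0 < r) (α : ℝ) (hα0 : 0 < α) (hα1 : α ≤ 1)
    (a b : ℝ) (ha : 0 ≤ a) (hb : 0 ≤ b) (f : ℂ → E)
    (hdiff : ∀ z : ℂ, 0 < ‖z‖ → ‖z‖ ≤ r → DifferentiableAt ℝ f z)
    (hbound : ∀ z : ℂ, 0 < ‖z‖ → ‖z‖ ≤ r →
      ‖fderiv ℝ f z‖ ≤ a * ‖z‖ ^ (α - 1) + b) :
    ∀ r₁ r₂ θ₁ θ₂ : ℝ, 0 < r₁ → r₁ ≤ r₂ → r₂ ≤ r →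
      θ₁ ∈ Set.Icc (0 : ℝ) (2 * Real.pi) → θ₂ ∈ Set.Icc (0 : ℝ) (2 * Real.pi) →
      ‖f ((r₂ : ℂ) * Complex.exp (θ₂ * Complex.I)) -
          f ((r₁ : ℂ) * Complex.exp (θ₁ * Complex.I))‖ ≤
        a / α * (r₂ ^ α - r₁ ^ α) + b * (r₂ - r₁) +
          (a * r₁ ^ α + b * r₁) * |θ₂ - θ₁| := by
  intro r₁ r₂ θ₁ θ₂ hr₁ h12 h2r _ _
  have hr₂ : 0 < r₂ := hr₁.trans_le h12
  have hexp : ∀ θ : ℝ, ‖Complex.exp ((θ : ℂ) * Complex.I)‖ = 1 := fun θ => by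
    simpa using Complex.abs_exp_ofReal_mul_I θ
  have hz : ∀ (s θ : ℝ), 0 < s → ‖(s : ℂ) * Complex.exp ((θ : ℂ) * Complex.I)‖ = s := by
    intro s θ hs
    rw [norm_mul, hexp, Complex.norm_real, Real.norm_of_nonneg hs.le, mul_one]
  -- derivative of the radial path
  have hpath : ∀ (θ s : ℝ), 0 < s → s ≤ r →
      HasDerivAt (fun t : ℝ => f ((t : ℂ) * Complex.exp ((θ : ℂ) * Complex.I)))
        (fderiv ℝ f ((s : ℂ) * Complex.exp ((θ : ℂ) * Complex.I))
          (Complex.exp ((θ : ℂ) * Complex.I))) s := by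
    intro θ s hs hsr
    have hd := (hdiff _ (by rw [hz s θ hs]; exact hs)
      (by rw [hz s θ hs]; exact hsr)).hasFDerivAt
    have hh : HasDerivAt (fun t : ℝ => (t : ℂ) * Complex.exp ((θ : ℂ) * Complex.I))
        (Complex.exp ((θ : ℂ) * Complex.I)) s := by
      simpa using (Complex.ofRealCLM.hasDerivAt (x := s)).mul_const
        (Complex.exp ((θ : ℂ) * Complex.I))
    exact hd.comp_hasDerivAt s hh
  -- radial estimate
  have hrad : ‖f ((r₂ : ℂ) * Complex.exp ((θ₂ : ℂ) * Complex.I)) -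
      f ((r₁ : ℂ) * Complex.exp ((θ₂ : ℂ) * Complex.I))‖ ≤
      a / α * (r₂ ^ α - r₁ ^ α) + b * (r₂ - r₁) := by
    set e : ℂ := Complex.exp ((θ₂ : ℂ) * Complex.I) with he
    set g : ℝ → E := fun t => f ((t : ℂ) * e) - f ((r₁ : ℂ) * e) with hg
    set B : ℝ → ℝ := fun t => a / α * (t ^ α - r₁ ^ α) + b * (t - r₁) with hB
    set B' : ℝ → ℝ := fun t => a * t ^ (α - 1) + b with hB'def
    have hgd : ∀ s ∈ Set.Icc r₁ r₂, HasDerivAt g (fderiv ℝ f ((s : ℂ) * e) e) s := by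
      intro s hs
      exact (hpath θ₂ s (hr₁.trans_le hs.1) (hs.2.trans h2r)).sub_const _
    have hg' : ∀ s ∈ Set.Ico r₁ r₂,
        HasDerivWithinAt g (fderiv ℝ f ((s : ℂ) * e) e) (Set.Ici s) s := fun s hs =>
      (hgd s ⟨hs.1, hs.2.le⟩).hasDerivWithinAt
    have hgc : ContinuousOn g (Set.Icc r₁ r₂) := fun s hs =>
      (hgd s hs).continuousAt.continuousWithinAt
    have hBd : ∀ s : ℝ, 0 < s → HasDerivAt B (B' s) s := by
      intro s hs0
      have h1 : HasDerivAt (fun t : ℝ => t ^ α) (α * s ^ (α - 1)) s :=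
        Real.hasDerivAt_rpow_const (Or.inl hs0.ne')
      have h2 : HasDerivAt B (a / α * (α * s ^ (α - 1)) + b * 1) s := by
        exact ((h1.sub_const _).const_mul (a / α)).add
          (((hasDerivAt_id s).sub_const r₁).const_mul b)
      have heq : a / α * (α * s ^ (α - 1)) + b * 1 = B' s := by
        rw [hB'def]; field_simp
      rwa [heq] at h2
    have hBc : ContinuousOn B (Set.Icc r₁ r₂) := fun s hs =>
      (hBd s (hr₁.trans_le hs.1)).continuousAt.continuousWithinAt
    have hB' : ∀ s ∈ Set.Ico r₁ r₂, HasDerivWithinAt B (B' s) (Set.Ici s) s := fun s hs =>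
      (hBd s (hr₁.trans_le hs.1)).hasDerivWithinAt
    have hbd : ∀ s ∈ Set.Ico r₁ r₂, ‖fderiv ℝ f ((s : ℂ) * e) e‖ ≤ B' s := by
      intro s hs
      have hs0 : 0 < s := hr₁.trans_le hs.1
      have hzn : ‖(s : ℂ) * e‖ = s := hz s θ₂ hs0
      calc ‖fderiv ℝ f ((s : ℂ) * e) e‖ ≤ ‖fderiv ℝ f ((s : ℂ) * e)‖ * ‖e‖ :=
            ContinuousLinearMap.le_opNorm _ _
        _ = ‖fderiv ℝ f ((s : ℂ) * e)‖ := by rw [he, hexp θ₂, mul_one]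
        _ ≤ a * ‖(s : ℂ) * e‖ ^ (α - 1) + b :=
            hbound _ (by rw [hzn]; exact hs0) (by rw [hzn]; exact hs.2.le.trans h2r)
        _ = B' s := by rw [hzn]
    have hstart : ‖g r₁‖ ≤ B r₁ := by simp [hg, hB]
    have := image_norm_le_of_norm_deriv_right_le_deriv_boundary' hgc hg' hstart hBc hB' hbd
      (Set.right_mem_Icc.2 h12)
    simpa [hg, hB] using this
  -- angular estimate
  have hang : ∀ s t : ℝ, s ≤ t →
      ‖f ((r₁ : ℂ) * Complex.exp ((t : ℂ) * Complex.I)) -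
        f ((r₁ : ℂ) * Complex.exp ((s : ℂ) * Complex.I))‖ ≤
        (a * r₁ ^ α + b * r₁) * (t - s) := by
    intro s t hst
    have hder : ∀ θ : ℝ, HasDerivAt
        (fun u : ℝ => f ((r₁ : ℂ) * Complex.exp ((u : ℂ) * Complex.I)))
        (fderiv ℝ f ((r₁ : ℂ) * Complex.exp ((θ : ℂ) * Complex.I))
          ((r₁ : ℂ) * (Complex.exp ((θ : ℂ) * Complex.I) * Complex.I))) θ := by
      intro θ
      have hd := (hdiff _ (by rw [hz r₁ θ hr₁]; exact hr₁)
        (by rw [hz r₁ θ hr₁]; exact h12.trans h2r)).hasFDerivAt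
      have hu : HasDerivAt (fun u : ℝ => (u : ℂ) * Complex.I) Complex.I θ := by
        simpa using (Complex.ofRealCLM.hasDerivAt (x := θ)).mul_const Complex.I
      have he : HasDerivAt (fun u : ℝ => Complex.exp ((u : ℂ) * Complex.I))
          (Complex.exp ((θ : ℂ) * Complex.I) * Complex.I) θ := hu.cexp
      have hh := he.const_mul ((r₁ : ℂ))
      exact hd.comp_hasDerivAt θ hh
    have hbd : ∀ θ ∈ Set.Ico s t,
        ‖fderiv ℝ f ((r₁ : ℂ) * Complex.exp ((θ : ℂ) * Complex.I))
          ((r₁ : ℂ) * (Complex.exp ((θ : ℂ) * Complex.I) * Complex.I))‖ ≤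
        a * r₁ ^ α + b * r₁ := by
      intro θ _
      have hzn : ‖(r₁ : ℂ) * Complex.exp ((θ : ℂ) * Complex.I)‖ = r₁ := hz r₁ θ hr₁
      have hvn : ‖(r₁ : ℂ) * (Complex.exp ((θ : ℂ) * Complex.I) * Complex.I)‖ = r₁ := by
        rw [norm_mul, norm_mul, hexp θ, Complex.norm_I, Complex.norm_real,
          Real.norm_of_nonneg hr₁.le, mul_one, mul_one]
      calc ‖fderiv ℝ f ((r₁ : ℂ) * Complex.exp ((θ : ℂ) * Complex.I))
            ((r₁ : ℂ) * (Complex.exp ((θ : ℂ) * Complex.I) * Complex.I))‖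
          ≤ ‖fderiv ℝ f ((r₁ : ℂ) * Complex.exp ((θ : ℂ) * Complex.I))‖ *
            ‖(r₁ : ℂ) * (Complex.exp ((θ : ℂ) * Complex.I) * Complex.I)‖ :=
            ContinuousLinearMap.le_opNorm _ _
        _ = ‖fderiv ℝ f ((r₁ : ℂ) * Complex.exp ((θ : ℂ) * Complex.I))‖ * r₁ := by
            rw [hvn]
        _ ≤ (a * r₁ ^ (α - 1) + b) * r₁ := by
            refine mul_le_mul_of_nonneg_right ?_ hr₁.le
            have := hbound _ (by rw [hzn]; exact hr₁) (by rw [hzn]; exact h12.trans h2r)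
            rwa [hzn] at this
        _ = a * r₁ ^ α + b * r₁ := by
            rw [add_mul, mul_assoc, ← Real.rpow_add_one hr₁.ne' (α - 1)]
            ring_nf
    exact norm_image_sub_le_of_norm_deriv_le_segment'
      (fun θ _ => (hder θ).hasDerivWithinAt) hbd t (Set.right_mem_Icc.2 hst)
  -- combine
  have htri : ‖f ((r₂ : ℂ) * Complex.exp ((θ₂ : ℂ) * Complex.I)) -
      f ((r₁ : ℂ) * Complex.exp ((θ₁ : ℂ) * Complex.I))‖ ≤
      ‖f ((r₂ : ℂ) * Complex.exp ((θ₂ : ℂ) * Complex.I)) -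
        f ((r₁ : ℂ) * Complex.exp ((θ₂ : ℂ) * Complex.I))‖ +
      ‖f ((r₁ : ℂ) * Complex.exp ((θ₂ : ℂ) * Complex.I)) -
        f ((r₁ : ℂ) * Complex.exp ((θ₁ : ℂ) * Complex.I))‖ :=
    norm_sub_le_norm_sub_add_norm_sub _ _ _
  rcases le_total θ₁ θ₂ with h | h
  · have h2 := hang θ₁ θ₂ h
    rw [abs_of_nonneg (sub_nonneg.2 h)]
    linarith
  · have h2 := hang θ₂ θ₁ h
    rw [norm_sub_rev] at h2
    rw [abs_of_nonpos (sub_nonpos.2 h)]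
    linarith
end

section
/- For every (v, w) ∈ ℂ × V one has ω̃((v, w), J̃(v, w)) ≥ ½·(c²·|v|² + ‖w + Xv‖²); in particular ω̃((v, w), J̃(v, w)) > 0 whenever (v, w) ≠ (0, 0), i.e. the form ω̃ tames the complex structure J̃. -/
open scoped RealInnerProductSpace

/-- The two-form `ω̃ = c²·ω₀ ⊕ ω` on `ℂ × V`, where `ω₀` is the standard area form
on `ℂ` and `ω(x, y) = ⟪J x, y⟫` is the two-form on `V` associated to `J`. -/
noncomputable def omegaTilde {V : Type*} [NormedAddCommGroup V] [InnerProductSpace ℝ V]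
    (J : V →L[ℝ] V) (c : ℝ) (p q : ℂ × V) : ℝ :=
  c ^ 2 * (p.1.re * q.1.im - p.1.im * q.1.re) + ⟪J p.2, q.2⟫

/-- The complex structure `J̃(v, w) = (i v, J w + J (X v) - X (i v))` on `ℂ × V`. -/
noncomputable def Jtilde {V : Type*} [NormedAddCommGroup V] [InnerProductSpace ℝ V]
    (J : V →L[ℝ] V) (X : ℂ →L[ℝ] V) (p : ℂ × V) : ℂ × V :=
  (Complex.I * p.1, J p.2 + J (X p.1) - X (Complex.I * p.1))

/-- Pointwise content of Lemma 3.2: `ω̃((v,w), J̃(v,w)) ≥ ½ (c² |v|² + ‖w + X v‖²)`,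
so in particular `ω̃` tames `J̃`. -/
theorem omegaTilde_tames_Jtilde
    {V : Type*} [NormedAddCommGroup V] [InnerProductSpace ℝ V]
    (J : V →L[ℝ] V) (hJ2 : ∀ x : V, J (J x) = -x)
    (hJiso : ∀ x y : V, ⟪J x, J y⟫ = ⟪x, y⟫)
    (c : ℝ) (hc : 1 < c)
    (X : ℂ →L[ℝ] V) (hX : ∀ v : ℂ, ‖X v‖ ≤ c / 5 * ‖v‖) :
    ∀ (v : ℂ) (w : V),
      (1 / 2 : ℝ) * (c ^ 2 * ‖v‖ ^ 2 + ‖w + X v‖ ^ 2) ≤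
        omegaTilde J c (v, w) (Jtilde J X (v, w)) ∧
      ((v, w) ≠ (0 : ℂ × V) → 0 < omegaTilde J c (v, w) (Jtilde J X (v, w))) := by
  intro v w
  have hJw : ‖J w‖ ^ 2 = ‖w‖ ^ 2 := by
    have := hJiso w w
    rw [real_inner_self_eq_norm_sq, real_inner_self_eq_norm_sq] at this
    exact this
  have hJwn : ‖J w‖ = ‖w‖ := by
    nlinarith [norm_nonneg (J w), norm_nonneg w]
  -- expand omegaTilde
  have hexp : omegaTilde J c (v, w) (Jtilde J X (v, w)) =
      c ^ 2 * ‖v‖ ^ 2 + ‖w‖ ^ 2 + ⟪w, X v⟫ - ⟪J w, X (Complex.I * v)⟫ := by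
    simp only [omegaTilde, Jtilde, inner_add_right, inner_sub_right, hJiso,
      real_inner_self_eq_norm_sq, Complex.mul_im, Complex.mul_re, Complex.I_re,
      Complex.I_im, Complex.sq_norm, Complex.normSq_apply]
    ring
  have hnormIv : ‖Complex.I * v‖ = ‖v‖ := by
    simp
  have hb1 : ⟪J w, X (Complex.I * v)⟫ ≤ ‖w‖ * (c / 5 * ‖v‖) := by
    calc ⟪J w, X (Complex.I * v)⟫ ≤ ‖J w‖ * ‖X (Complex.I * v)‖ := real_inner_le_norm _ _
    _ ≤ ‖w‖ * (c / 5 * ‖v‖) := by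
        rw [hJwn]
        exact mul_le_mul_of_nonneg_left (by simpa [hnormIv] using hX (Complex.I * v))
          (norm_nonneg w)
  have hXv : ‖X v‖ ≤ c / 5 * ‖v‖ := hX v
  have hsq : ‖w + X v‖ ^ 2 = ‖w‖ ^ 2 + 2 * ⟪w, X v⟫ + ‖X v‖ ^ 2 := by
    rw [@norm_add_sq_real]
  have hmain : (1 / 2 : ℝ) * (c ^ 2 * ‖v‖ ^ 2 + ‖w + X v‖ ^ 2) ≤
      omegaTilde J c (v, w) (Jtilde J X (v, w)) := by
    rw [hexp, hsq]
    nlinarith [norm_nonneg v, norm_nonneg w, norm_nonneg (X v), sq_nonneg (‖w‖ - c/5 * ‖v‖),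
      mul_pos (zero_lt_one.trans hc) (zero_lt_one.trans hc)]
  refine ⟨hmain, fun hne => ?_⟩
  have : 0 < (1 / 2 : ℝ) * (c ^ 2 * ‖v‖ ^ 2 + ‖w + X v‖ ^ 2) := by
    rcases eq_or_ne v 0 with hv | hv
    · have hw : w ≠ 0 := fun h => hne (by simp [hv, h])
      have : w + X v = w := by simp [hv]
      rw [this]
      have := norm_pos_iff.mpr hw
      positivity
    · have := norm_pos_iff.mpr hv
      have hc0 : 0 < c := zero_lt_one.trans hc
      nlinarith [sq_nonneg ‖w + X v‖, mul_pos (pow_pos hc0 2) (pow_pos this 2)]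
  linarith
end

section
/- For every (v, w) ∈ ℂ × V one has the two-sided comparison ½·(|v|² + ‖w + Xv‖²) ≤ ω̃((v, w), J̃(v, w)) ≤ 3c²·(|v|² + ‖w + Xv‖²). -/
open scoped RealInnerProductSpace

/-- Pointwise content of Lemma 3.3: the norm determined by `ω̃` and `J̃` is uniformly
comparable to `|v|² + ‖w + X v‖²`:
`½ (|v|² + ‖w + Xv‖²) ≤ ω̃((v,w), J̃(v,w)) ≤ 3 c² (|v|² + ‖w + Xv‖²)`. -/
theorem omegaTilde_metric_comparison
    {V : Type*} [NormedAddCommGroup V] [InnerProductSpace ℝ V]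
    (J : V →L[ℝ] V) (hJ2 : ∀ x : V, J (J x) = -x)
    (hJiso : ∀ x y : V, ⟪J x, J y⟫ = ⟪x, y⟫)
    (c : ℝ) (hc : 1 < c)
    (X : ℂ →L[ℝ] V) (hX : ∀ v : ℂ, ‖X v‖ ≤ c / 5 * ‖v‖) :
    ∀ (v : ℂ) (w : V),
      (1 / 2 : ℝ) * (‖v‖ ^ 2 + ‖w + X v‖ ^ 2) ≤
          omegaTilde J c (v, w) (Jtilde J X (v, w)) ∧
      omegaTilde J c (v, w) (Jtilde J X (v, w)) ≤
          3 * c ^ 2 * (‖v‖ ^ 2 + ‖w + X v‖ ^ 2) := by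

  intro v w
  have hJnorm : ∀ x : V, ‖J x‖ = ‖x‖ := by
    intro x
    have h := hJiso x x
    rw [real_inner_self_eq_norm_sq, real_inner_self_eq_norm_sq] at h
    nlinarith [norm_nonneg (J x), norm_nonneg x]
  set u := w + X v with hu
  have hw : w = u - X v := by simp [hu]
  have hnv : ‖v‖ ^ 2 = v.re ^ 2 + v.im ^ 2 := by
    rw [Complex.sq_norm, Complex.normSq_apply]; ring
  have hQ : omegaTilde J c (v, w) (Jtilde J X (v, w)) =
      c ^ 2 * ‖v‖ ^ 2 + ⟪u, u⟫ - ⟪X v, u⟫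
        - ⟪J (u - X v), X (Complex.I * v)⟫ := by
    simp only [omegaTilde, Jtilde]
    rw [hw]
    simp only [map_sub, inner_sub_left, inner_sub_right, inner_add_right, hJiso,
      Complex.mul_re, Complex.mul_im, Complex.I_re, Complex.I_im, hnv]
    ring
  rw [hQ]
  have hob : ‖u‖ ^ 2 = ⟪u, u⟫ := (real_inner_self_eq_norm_sq u).symm
  have hXv : ‖X v‖ ≤ c / 5 * ‖v‖ := hX v
  have hXiv : ‖X (Complex.I * v)‖ ≤ c / 5 * ‖v‖ := by
    have := hX (Complex.I * v)
    simpa using this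
  have h1 : |⟪X v, u⟫| ≤ c / 5 * ‖v‖ * ‖u‖ := by
    calc |⟪X v, u⟫| ≤ ‖X v‖ * ‖u‖ := abs_real_inner_le_norm _ _
    _ ≤ c / 5 * ‖v‖ * ‖u‖ := by
        exact mul_le_mul_of_nonneg_right hXv (norm_nonneg u)
  have h2 : |⟪J (u - X v), X (Complex.I * v)⟫| ≤ (‖u‖ + c / 5 * ‖v‖) * (c / 5 * ‖v‖) := by
    calc |⟪J (u - X v), X (Complex.I * v)⟫| ≤ ‖J (u - X v)‖ * ‖X (Complex.I * v)‖ :=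
        abs_real_inner_le_norm _ _
    _ = ‖u - X v‖ * ‖X (Complex.I * v)‖ := by rw [hJnorm]
    _ ≤ (‖u‖ + ‖X v‖) * (c / 5 * ‖v‖) := by
        apply mul_le_mul (norm_sub_le _ _) hXiv (norm_nonneg _)
        positivity
    _ ≤ (‖u‖ + c / 5 * ‖v‖) * (c / 5 * ‖v‖) := by
        apply mul_le_mul_of_nonneg_right _ (by positivity)
        linarith
  rw [abs_le] at h1 h2
  have hvn : (0:ℝ) ≤ ‖v‖ := norm_nonneg v
  have hun : (0:ℝ) ≤ ‖u‖ := norm_nonneg u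
  constructor
  · nlinarith [sq_nonneg (‖u‖ - 2 * c / 5 * ‖v‖), sq_nonneg ‖v‖, sq_nonneg ‖u‖,
      mul_nonneg hvn hun, sq_nonneg (c - 1)]
  · nlinarith [sq_nonneg (‖u‖ - ‖v‖), sq_nonneg ‖v‖, sq_nonneg ‖u‖,
      mul_nonneg hvn hun, sq_nonneg (c - 1), mul_nonneg (mul_nonneg hvn hun) (le_of_lt (lt_trans one_pos hc))]
end

section
/- Let V be a real normed vector space and D ⊆ ℂ an open set. For each z ∈ D let J(z) : V → V be a continuous ℝ-linear map with J(z) ∘ J(z) = −id, and let X(z) : ℂ → V be a continuous ℝ-linear map. Define J̃(z) : ℂ × V → ℂ × V by J̃(z)(v, ξ) := (iv, J(z)ξ + J(z)(X(z)v) − X(z)(iv)). Then: (a) J̃(z) ∘ J̃(z) = −id for every z ∈ D, so each J̃(z) is a linear complex structure on ℂ × V; and (b) if u : D → V is differentiable and satisfies the first vortex equation J(z)(Du(z)(v) + X(z)(v)) = Du(z)(iv) + X(z)(iv) for all z ∈ D and v ∈ ℂ, then the graph map ũ : D → ℂ × V defined by ũ(z) := (z, u(z)) is differentiable and satisfies Dũ(z)(iv)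 = J̃(z)(Dũ(z)(v)) for all z ∈ D and v ∈ ℂ, i.e. ũ is holomorphic with respect to the family J̃. -/
/-- The family of complex structures
`J̃(z)(v, ξ) = (i v, J(z) ξ + J(z)(X(z) v) - X(z)(i v))` on `ℂ × V`. -/
noncomputable def JtildeFam {V : Type*} [NormedAddCommGroup V] [NormedSpace ℝ V]
    (J : ℂ → V →L[ℝ] V) (X : ℂ → ℂ →L[ℝ] V) (z : ℂ) (p : ℂ × V) : ℂ × V :=
  (Complex.I * p.1, J z p.2 + J z (X z p.1) - X z (Complex.I * p.1))

/-- Lemma 3.1 and the computation preceding it: (a) `J̃(z)² = -id` for `z ∈ D`, and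
(b) if `u : D → V` is differentiable and satisfies the first vortex equation
`J(z)(Du(z)v + X(z)v) = Du(z)(iv) + X(z)(iv)`, then the graph map `ũ(z) = (z, u(z))`
is differentiable and `(i, J̃)`-holomorphic: `Dũ(z)(iv) = J̃(z)(Dũ(z)v)`. -/
theorem graph_of_vortex_is_Jtilde_holomorphic
    {V : Type*} [NormedAddCommGroup V] [NormedSpace ℝ V]
    (D : Set ℂ) (hD : IsOpen D)
    (J : ℂ → V →L[ℝ] V) (X : ℂ → ℂ →L[ℝ] V)
    (hJ : ∀ z ∈ D, ∀ ξ : V, J z (J z ξ) = -ξ) :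
    (∀ z ∈ D, ∀ p : ℂ × V, JtildeFam J X z (JtildeFam J X z p) = -p) ∧
    (∀ u : ℂ → V, (∀ z ∈ D, DifferentiableAt ℝ u z) →
      (∀ z ∈ D, ∀ v : ℂ,
        J z (fderiv ℝ u z v + X z v) =
          fderiv ℝ u z (Complex.I * v) + X z (Complex.I * v)) →
      (∀ z ∈ D, DifferentiableAt ℝ (fun w : ℂ => ((w, u w) : ℂ × V)) z) ∧
      (∀ z ∈ D, ∀ v : ℂ,
        fderiv ℝ (fun w : ℂ => ((w, u w) : ℂ × V)) z (Complex.I * v) =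
          JtildeFam J X z (fderiv ℝ (fun w : ℂ => ((w, u w) : ℂ × V)) z v))) := by
  constructor
  · intro z hz p
    simp only [JtildeFam, map_add, map_sub, hJ z hz]
    rw [show Complex.I * (Complex.I * p.1) = -p.1 by
      rw [← mul_assoc, Complex.I_mul_I, neg_one_mul]]
    ext
    · simp
    · simp only [map_neg, Prod.snd_neg]
      abel
  · intro u hu hvort
    have hdiff : ∀ z ∈ D, DifferentiableAt ℝ (fun w : ℂ => ((w, u w) : ℂ × V)) z :=
      fun z hz => (differentiableAt_id.prodMk (hu z hz))
    refine ⟨hdiff, fun z hz v => ?_⟩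
    have hf : fderiv ℝ (fun w : ℂ => ((w, u w) : ℂ × V)) z
        = (fderiv ℝ id z).prod (fderiv ℝ u z) :=
      DifferentiableAt.fderiv_prodMk differentiableAt_id (hu z hz)
    rw [fderiv_id] at hf
    have key : fderiv ℝ u z (Complex.I * v)
        = J z (fderiv ℝ u z v) + J z (X z v) - X z (Complex.I * v) := by
      have h := hvort z hz v
      rw [map_add] at h
      rw [h]; abel
    rw [hf]
    simp only [ContinuousLinearMap.prod_apply, ContinuousLinearMap.id_apply, JtildeFam, key]
end
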